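/- If f ∈ L²(μ) satisfies E(Cov_n(f,f|I)) → 0 as n → ∞, then for every g ∈ L²(μ), E(Cov_n(f,g|I)) → 0 as n → ∞. -/

import Mathlib

open MeasureTheory Filter Topology ContinuousLinearMap

local notation "⟪" x ", " y "⟫" => @inner ℂ _ _ x y

noncomputable section

/-- The σ-algebra of invariant measurable sets of `T`. -/
def invSigma {Ω : Type*} [MeasurableSpace Ω] (T : Ω → Ω) : MeasurableSpace Ω where
  MeasurableSet' A := MeasurableSet A ∧ T ⁻¹' A = A
  measurableSet_empty := ⟨MeasurableSet.empty, by simp⟩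
  measurableSet_compl := fun A hA => ⟨hA.1.compl, by rw [Set.preimage_compl, hA.2]⟩
  measurableSet_iUnion := fun f hf =>
    ⟨MeasurableSet.iUnion fun i => (hf i).1, by
      rw [Set.preimage_iUnion]
      exact Set.iUnion_congr fun i => (hf i).2⟩

/-- `E(Cov_n(f,g|I)) = ∫ conj(f)·(g∘T^n) dμ − ∫ conj(E(f|I))·E(g|I) dμ`. -/
def expCovInv {Ω : Type*} [MeasurableSpace Ω] (μ : Measure Ω) (T : Ω → Ω)
    (f g : Ω → ℂ) (n : ℕ) : ℂ :=
  (∫ x, (starRingEnd ℂ) (f x) * g (T^[n] x) ∂μ) -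
    ∫ x, (starRingEnd ℂ) ((μ[f | invSigma T]) x) * (μ[g | invSigma T]) x ∂μ

/-- An `invSigma T`-strongly measurable function is exactly `T`-invariant. -/
lemma invSigma_comp_eq {Ω : Type*} [MeasurableSpace Ω] {T : Ω → Ω} {φ : Ω → ℂ}
    (hφ : StronglyMeasurable[invSigma T] φ) (x : Ω) : φ (T x) = φ x := by
  have hmeas : Measurable[invSigma T] φ := hφ.measurable
  have h : T ⁻¹' (φ ⁻¹' {φ x}) = φ ⁻¹' {φ x} :=
    (hmeas (measurableSet_singleton (φ x))).2
  have hx : x ∈ φ ⁻¹' {φ x} := rfl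
  rw [← h] at hx
  simpa using hx

lemma core_weak_tendsto {H : Type*} [NormedAddCommGroup H] [InnerProductSpace ℂ H]
    [CompleteSpace H] (U : H →L[ℂ] H) (hU : ∀ x, ‖U x‖ = ‖x‖) (h : H)
    (hc : Tendsto (fun n : ℕ => ⟪(adjoint U ^ n) h, h⟫) atTop (𝓝 0)) (w : H) :
    Tendsto (fun n : ℕ => ⟪(adjoint U ^ n) h, w⟫) atTop (𝓝 0) := by
  set A := adjoint U with hA
  set y : ℕ → H := fun n => (A ^ n) h with hy
  -- inner product preservation
  have hinner : ∀ x z : H, ⟪U x, U z⟫ = ⟪x, z⟫ := fun x z =>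
    LinearIsometry.inner_map_map ⟨(U : H →ₗ[ℂ] H), hU⟩ x z
  have hpow_inner : ∀ (n : ℕ) (x z : H), ⟪(U ^ n) x, (U ^ n) z⟫ = ⟪x, z⟫ := by
    intro n
    induction n with
    | zero => simp
    | succ n ih =>
      intro x z
      rw [pow_succ', mul_apply_eq_comp, mul_apply_eq_comp, hinner, ih]
  have hadj : ∀ (n : ℕ) (x z : H), ⟪(A ^ n) x, z⟫ = ⟪x, (U ^ n) z⟫ := by
    intro n
    induction n with
    | zero => simp
    | succ n ih =>
      intro x z
      rw [pow_succ, mul_apply_eq_comp, ih, hA, adjoint_inner_left, ← mul_apply_eq_comp, ← pow_succ']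
  have hAU : ∀ (n : ℕ) (x : H), (A ^ n) ((U ^ n) x) = x := by
    intro n x
    apply ext_inner_right ℂ
    intro v
    rw [hadj, hpow_inner]
  have hAle : ∀ z : H, ‖A z‖ ≤ ‖z‖ := by
    intro z
    rcases eq_or_lt_of_le (norm_nonneg (A z)) with h0 | h0
    · rw [← h0]; exact norm_nonneg z
    have h1 : (‖A z‖ : ℝ) ^ 2 = RCLike.re ⟪A z, A z⟫ := by
      rw [inner_self_eq_norm_sq]
    have h2 : ⟪A z, A z⟫ = ⟪z, U (A z)⟫ := by rw [hA, adjoint_inner_left]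
    have h3 : RCLike.re ⟪z, U (A z)⟫ ≤ ‖z‖ * ‖U (A z)‖ := re_inner_le_norm _ _
    rw [hU] at h3
    nlinarith [h1, h2 ▸ h1]
  set a : ℕ → ℝ := fun n => ‖y n‖ with ha
  have hysucc : ∀ n, y (n + 1) = A (y n) := by
    intro n
    simp only [hy, pow_succ', mul_apply_eq_comp]
  have hanti : Antitone a := by
    apply antitone_nat_of_succ_le
    intro n
    rw [ha]
    simp only
    rw [hysucc n]
    exact hAle _
  have hbdd : BddBelow (Set.range a) := ⟨0, by rintro r ⟨n, rfl⟩; exact norm_nonneg _⟩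
  set L := ⨅ n, a n with hL
  have hLa : Tendsto a atTop (𝓝 L) := tendsto_atTop_ciInf hanti hbdd
  have hUnorm : ∀ (n : ℕ) (x : H), ‖(U ^ n) x‖ = ‖x‖ := by
    intro n
    induction n with
    | zero => simp
    | succ n ih => intro x; rw [pow_succ', mul_apply_eq_comp, hU, ih]
  -- key step : ⟪y n, y m⟫ → 0 for every fixed m
  have hyy : ∀ m : ℕ, Tendsto (fun n => ⟪y n, y m⟫) atTop (𝓝 0) := by
    intro m
    set v : H := h - (U ^ m) (y m) with hv
    have hAv : (A ^ m) v = 0 := by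
      rw [hv, map_sub, hAU m (y m)]
      exact sub_eq_zero_of_eq rfl
    have hshift : ∀ k : ℕ, y (k + m) = (A ^ m) (y k) := by
      intro k
      simp only [hy, ← mul_apply_eq_comp, ← pow_add]
      rw [add_comm]
    have hval : ∀ k : ℕ, ⟪y k, v⟫ = ⟪(U ^ k) (y k) - (U ^ (k + m)) (y (k + m)), (U ^ k) v⟫ := by
      intro k
      rw [inner_sub_left, hpow_inner k]
      have he : ∀ z : H, (U ^ (k + m)) z = (U ^ k) ((U ^ m) z) := by
        intro z; rw [pow_add]; rfl
      have h2 : ⟪(U ^ (k + m)) (y (k + m)), (U ^ k) v⟫ = 0 := by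
        rw [he (y (k + m)), hpow_inner k]
        have h3 : ⟪v, (U ^ m) (y (k + m))⟫ = 0 := by
          rw [← hadj m, hAv, inner_zero_left]
        rw [← inner_conj_symm, h3, map_zero]
      rw [h2, sub_zero]
    have hinner2 : ∀ k : ℕ, ⟪(U ^ k) (y k), (U ^ (k + m)) (y (k + m))⟫
        = ((a (k + m) ^ 2 : ℝ) : ℂ) := by
      intro k
      have he : ∀ z : H, (U ^ (k + m)) z = (U ^ k) ((U ^ m) z) := by
        intro z; rw [pow_add]; rfl
      rw [he (y (k + m)), hpow_inner k, ← hadj m, ← hshift k]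
      rw [@inner_self_eq_norm_sq_to_K ℂ]
      norm_cast
    have hnormval : ∀ k : ℕ, ‖(U ^ k) (y k) - (U ^ (k + m)) (y (k + m))‖ ^ 2
        = a k ^ 2 - a (k + m) ^ 2 := by
      intro k
      rw [@norm_sub_sq ℂ, hinner2 k, hUnorm, hUnorm]
      have hre : RCLike.re ((a (k + m) ^ 2 : ℝ) : ℂ) = a (k + m) ^ 2 := by
        simp [← Complex.ofReal_pow]
      have e1 : ‖y k‖ = a k := rfl
      have e2 : ‖y (k + m)‖ = a (k + m) := rfl
      rw [hre, e1, e2]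
      ring
    have hkey : ∀ k : ℕ, ⟪y (k + m), y m⟫ = ⟪y k, h⟫ - ⟪y k, v⟫ := by
      intro k
      rw [hshift k, hadj m]
      have : (U ^ m) (y m) = h - v := by rw [hv]; abel
      rw [this, inner_sub_right]
    have hbound : ∀ k : ℕ, ‖⟪y (k + m), y m⟫‖
        ≤ ‖⟪y k, h⟫‖ + ‖v‖ * Real.sqrt (a k ^ 2 - a (k + m) ^ 2) := by
      intro k
      rw [hkey k]
      refine (norm_sub_le _ _).trans (add_le_add le_rfl ?_)
      rw [hval k]
      refine (norm_inner_le_norm _ _).trans ?_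
      have h1 : ‖(U ^ k) (y k) - (U ^ (k + m)) (y (k + m))‖
          = Real.sqrt (a k ^ 2 - a (k + m) ^ 2) := by
        rw [← hnormval k, Real.sqrt_sq (norm_nonneg _)]
      rw [h1, hUnorm, mul_comm]
    have hsq : Tendsto (fun k => a k ^ 2 - a (k + m) ^ 2) atTop (𝓝 0) := by
      have h1 : Tendsto (fun k => a k ^ 2) atTop (𝓝 (L ^ 2)) := (hLa.pow 2)
      have h2 : Tendsto (fun k => a (k + m) ^ 2) atTop (𝓝 (L ^ 2)) :=
        (hLa.pow 2).comp (tendsto_add_atTop_nat m)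
      simpa using h1.sub h2
    have hrhs : Tendsto (fun k => ‖⟪y k, h⟫‖ + ‖v‖ * Real.sqrt (a k ^ 2 - a (k + m) ^ 2))
        atTop (𝓝 0) := by
      have h1 : Tendsto (fun k => ‖⟪y k, h⟫‖) atTop (𝓝 0) := by
        simpa only [norm_zero] using hc.norm
      have h2 : Tendsto (fun k => Real.sqrt (a k ^ 2 - a (k + m) ^ 2)) atTop (𝓝 0) := by
        have := (Real.continuous_sqrt.tendsto 0).comp hsq
        simpa [Function.comp_def] using this
      have h3 : Tendsto (fun k => ‖v‖ * Real.sqrt (a k ^ 2 - a (k + m) ^ 2)) atTop (𝓝 0) := by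
        simpa using h2.const_mul ‖v‖
      simpa using h1.add h3
    have hshifted : Tendsto (fun k => ⟪y (k + m), y m⟫) atTop (𝓝 0) :=
      squeeze_zero_norm hbound hrhs
    exact (tendsto_add_atTop_iff_nat m).mp hshifted
  -- general w by orthogonal decomposition and density
  set W := (Submodule.span ℂ (Set.range y)).topologicalClosure with hW
  have hyW : ∀ n, y n ∈ W := fun n =>
    (Submodule.le_topologicalClosure _) (Submodule.subset_span ⟨n, rfl⟩)
  haveI : CompleteSpace W := (Submodule.isClosed_topologicalClosure _).completeSpace_coe
  set w1 : H := ↑(W.orthogonalProjectionOnto w) with hw1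
  have hw2 : w - w1 ∈ Wᗮ := Submodule.sub_starProjection_mem_orthogonal (K := W) w
  have hzero : ∀ n, ⟪y n, w - w1⟫ = 0 := fun n =>
    (Submodule.mem_orthogonal W (w - w1)).mp hw2 (y n) (hyW n)
  have hspan : ∀ s ∈ Submodule.span ℂ (Set.range y),
      Tendsto (fun n => ⟪y n, s⟫) atTop (𝓝 0) := by
    intro s hs
    induction hs using Submodule.span_induction with
    | mem x hx => obtain ⟨m, rfl⟩ := hx; exact hyy m
    | zero => simpa using tendsto_const_nhds
    | add x z hx hz ihx ihz =>
        simpa [inner_add_right] using ihx.add ihz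
    | smul c x hx ih =>
        simpa [inner_smul_right] using ih.const_mul c
  have hW1 : Tendsto (fun n => ⟪y n, w1⟫) atTop (𝓝 0) := by
    rw [NormedAddCommGroup.tendsto_nhds_zero]
    intro ε hε
    have hmem : w1 ∈ closure ((Submodule.span ℂ (Set.range y) : Submodule ℂ H) : Set H) := by
      rw [← Submodule.topologicalClosure_coe]
      exact (W.orthogonalProjectionOnto w).2
    have hδ : (0 : ℝ) < ε / (2 * (‖h‖ + 1)) := by positivity
    obtain ⟨s, hsmem, hsdist⟩ := Metric.mem_closure_iff.mp hmem _ hδ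
    rw [dist_eq_norm] at hsdist
    have hs0 := hspan s hsmem
    have heps : ∀ᶠ n in atTop, ‖⟪y n, s⟫‖ < ε / 2 := by
      have := (NormedAddCommGroup.tendsto_nhds_zero.mp hs0) (ε / 2) (by positivity)
      exact this
    filter_upwards [heps] with n hn
    have hdecomp : ⟪y n, w1⟫ = ⟪y n, s⟫ + ⟪y n, w1 - s⟫ := by
      rw [← inner_add_right, add_sub_cancel]
    rw [hdecomp]
    have hyn : ‖y n‖ ≤ ‖h‖ := by
      have := hanti (Nat.zero_le n)
      simpa [ha, hy] using this
    have h2 : ‖⟪y n, w1 - s⟫‖ ≤ ‖h‖ * (ε / (2 * (‖h‖ + 1))) := by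
      refine (norm_inner_le_norm _ _).trans ?_
      exact mul_le_mul hyn hsdist.le (norm_nonneg _) (norm_nonneg _)
    have h3 : ‖h‖ * (ε / (2 * (‖h‖ + 1))) < ε / 2 := by
      have hh : (0 : ℝ) < ‖h‖ + 1 := by positivity
      have h4 : ‖h‖ / (‖h‖ + 1) < 1 := (div_lt_one hh).mpr (by linarith)
      calc ‖h‖ * (ε / (2 * (‖h‖ + 1))) = (‖h‖ * ε) / (2 * (‖h‖ + 1)) := by
            rw [mul_div_assoc']
        _ = (‖h‖ * ε) / ((‖h‖ + 1) * 2) := by rw [mul_comm 2 (‖h‖ + 1)]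
        _ = (‖h‖ / (‖h‖ + 1)) * (ε / 2) := (div_mul_div_comm _ _ _ _).symm
        _ < 1 * (ε / 2) := by
            apply mul_lt_mul_of_pos_right h4
            positivity
        _ = ε / 2 := one_mul _
    calc ‖⟪y n, s⟫ + ⟪y n, w1 - s⟫‖ ≤ ‖⟪y n, s⟫‖ + ‖⟪y n, w1 - s⟫‖ := norm_add_le _ _
      _ < ε / 2 + ε / 2 := by
          apply add_lt_add_of_lt_of_le hn
          exact h2.trans h3.le
      _ = ε := by ring
  have hfinal : ∀ n, ⟪y n, w⟫ = ⟪y n, w1⟫ := by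
    intro n
    have : w = w1 + (w - w1) := by abel
    rw [this, inner_add_right, hzero, add_zero]
  exact hW1.congr (fun n => (hfinal n).symm)


/-- If `f ∈ L²(μ)` satisfies `E(Cov_n(f,f|I)) → 0`, then for every `g ∈ L²(μ)`,
`E(Cov_n(f,g|I)) → 0` as `n → ∞`. -/
theorem expCovInv_self_tendsto_zero_imp
    {Ω : Type*} [MeasurableSpace Ω] (μ : Measure Ω) [IsProbabilityMeasure μ]
    (T : Ω → Ω) (hT : MeasurePreserving T μ μ)
    (f : Ω → ℂ) (hf : MemLp f 2 μ)
    (hff : Tendsto (fun n : ℕ => expCovInv μ T f f n) atTop (𝓝 0))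
    (g : Ω → ℂ) (hg : MemLp g 2 μ) :
    Tendsto (fun n : ℕ => expCovInv μ T f g n) atTop (𝓝 0) := by
  have hm : invSigma T ≤ ‹MeasurableSpace Ω› := fun s hs => hs.1
  haveI hfact : Fact (invSigma T ≤ ‹MeasurableSpace Ω›) := ⟨hm⟩
  haveI : SigmaFinite (μ.trim hm) := inferInstance
  -- the Koopman operator on L²
  have hsmul : ∀ (c : ℂ) (φ : Lp ℂ 2 μ),
      Lp.compMeasurePreserving T hT (c • φ) = c • Lp.compMeasurePreserving T hT φ := by
    intro c φ
    apply Lp.ext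
    have h1 := Lp.coeFn_compMeasurePreserving (c • φ) hT
    have h2 := Lp.coeFn_compMeasurePreserving φ hT
    have h3 : (↑(c • φ) : Ω → ℂ) =ᵐ[μ] c • (φ : Ω → ℂ) := Lp.coeFn_smul c φ
    have h4 : (↑(c • φ) : Ω → ℂ) ∘ T =ᵐ[μ] (c • (φ : Ω → ℂ)) ∘ T := by
      apply ae_eq_comp (hT.measurable.aemeasurable)
      rwa [hT.map_eq]
    have h5 : (↑(c • Lp.compMeasurePreserving T hT φ) : Ω → ℂ)
        =ᵐ[μ] c • (↑(Lp.compMeasurePreserving T hT φ) : Ω → ℂ) :=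
      Lp.coeFn_smul c _
    filter_upwards [h1, h2, h4, h5] with x hx1 hx2 hx4 hx5
    rw [hx1, hx5, Pi.smul_apply, hx2]
    calc ((↑(c • φ) : Ω → ℂ) ∘ T) x = ((c • (φ : Ω → ℂ)) ∘ T) x := hx4
      _ = c • ((φ : Ω → ℂ) ∘ T) x := rfl
  let Kiso : Lp ℂ 2 μ →ₗᵢ[ℂ] Lp ℂ 2 μ :=
    ⟨{ toFun := Lp.compMeasurePreserving T hT,
       map_add' := fun φ ψ => map_add _ φ ψ,
       map_smul' := hsmul },
     fun φ => Lp.norm_compMeasurePreserving φ hT⟩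
  let K : Lp ℂ 2 μ →L[ℂ] Lp ℂ 2 μ := Kiso.toContinuousLinearMap
  have hKcoe : ∀ φ : Lp ℂ 2 μ, K φ = Lp.compMeasurePreserving T hT φ := fun _ => rfl
  have hKnorm : ∀ φ : Lp ℂ 2 μ, ‖K φ‖ = ‖φ‖ := fun φ => Lp.norm_compMeasurePreserving φ hT
  -- the conditional expectation as L² orthogonal projection
  set P := condExpL2 ℂ ℂ hm (μ := μ) with hP
  set F : Lp ℂ 2 μ := hf.toLp f with hF
  set G : Lp ℂ 2 μ := hg.toLp g with hG
  set p : Lp ℂ 2 μ := ↑(P F) with hp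
  set q : Lp ℂ 2 μ := ↑(P G) with hq
  -- condexpL2 agrees a.e. with condexp
  have hPae : ∀ (φ : Ω → ℂ) (hφ : MemLp φ 2 μ),
      (↑(↑(P (hφ.toLp φ)) : Lp ℂ 2 μ) : Ω → ℂ) =ᵐ[μ] μ[φ | invSigma T] := by
    intro φ hφ
    refine ae_eq_condExp_of_forall_setIntegral_eq hm (hφ.integrable one_le_two)
      (fun s _ hμs => integrableOn_Lp_of_measure_ne_top _ fact_one_le_two_ennreal.elim hμs.ne)
      (fun s hs hμs => ?_) (aestronglyMeasurable_condExpL2 hm _)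
    rw [hP, integral_condExpL2_eq hm (hφ.toLp φ) hs hμs.ne]
    exact setIntegral_congr_ae (hm s hs) ((hφ.coeFn_toLp).mono fun x hx _ => hx)
  -- invariance of lpMeas elements
  have hKfix : ∀ ψ : Lp ℂ 2 μ, ψ ∈ lpMeas ℂ ℂ (invSigma T) 2 μ → K ψ = ψ := by
    intro ψ hψ
    obtain ⟨φ, hφmeas, hφeq⟩ := hψ
    apply Lp.ext
    have h1 := Lp.coeFn_compMeasurePreserving ψ hT
    have h2 : (↑ψ : Ω → ℂ) ∘ T =ᵐ[μ] φ ∘ T := by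
      apply ae_eq_comp (hT.measurable.aemeasurable)
      rw [hT.map_eq]
      exact hφeq
    have h3 : φ ∘ T = φ := funext fun x => invSigma_comp_eq hφmeas x
    rw [hKcoe]
    calc (↑(Lp.compMeasurePreserving T hT ψ) : Ω → ℂ)
        =ᵐ[μ] (↑ψ : Ω → ℂ) ∘ T := h1
      _ =ᵐ[μ] φ ∘ T := h2
      _ = φ := h3
      _ =ᵐ[μ] ↑ψ := hφeq.symm
  have hKp : K p = p := hKfix p (P F).2
  have hKq : K q = q := hKfix q (P G).2
  -- adjoint facts
  have hKinner : ∀ x z : Lp ℂ 2 μ, ⟪K x, K z⟫ = ⟪x, z⟫ := fun x z =>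
    Kiso.inner_map_map x z
  have hAK : ∀ x : Lp ℂ 2 μ, adjoint K (K x) = x := by
    intro x
    apply ext_inner_right ℂ
    intro v
    rw [adjoint_inner_left, hKinner]
  have hAp : adjoint K p = p := by
    conv_lhs => rw [← hKp]
    rw [hAK]
  have hApow : ∀ n : ℕ, ((adjoint K) ^ n) p = p := by
    intro n
    induction n with
    | zero => simp
    | succ n ih => rw [pow_succ, mul_apply_eq_comp, hAp, ih]
  have hKpow : ∀ n : ℕ, (K ^ n) p = p := by
    intro n
    induction n with
    | zero => simp
    | succ n ih => rw [pow_succ, mul_apply_eq_comp, hKp, ih]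
  have hadjpow : ∀ (n : ℕ) (x z : Lp ℂ 2 μ), ⟪((adjoint K) ^ n) x, z⟫ = ⟪x, (K ^ n) z⟫ := by
    intro n
    induction n with
    | zero => simp
    | succ n ih =>
      intro x z
      rw [pow_succ, mul_apply_eq_comp, ih, adjoint_inner_left, ← mul_apply_eq_comp, ← pow_succ']
  -- orthogonality of the projection
  have horth : ∀ Φ z : Lp ℂ 2 μ, z ∈ lpMeas ℂ ℂ (invSigma T) 2 μ → ⟪Φ - ↑(P Φ), z⟫ = 0 := by
    intro Φ z hz
    rw [hP, condExpL2]
    exact Submodule.starProjection_inner_eq_zero (K := lpMeas ℂ ℂ (invSigma T) 2 μ) Φ z hz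
  have hpF : ⟪p, F⟫ = ⟪p, p⟫ := by
    have h1 : ⟪F - p, p⟫ = 0 := horth F p (P F).2
    have h2 : ⟪p, F - p⟫ = 0 := by rw [← inner_conj_symm, h1, map_zero]
    rw [inner_sub_right] at h2
    linear_combination h2
  have hpG : ⟪p, G⟫ = ⟪p, q⟫ := by
    have h1 : ⟪G - q, p⟫ = 0 := horth G p (P F).2
    have h2 : ⟪p, G - q⟫ = 0 := by rw [← inner_conj_symm, h1, map_zero]
    rw [inner_sub_right] at h2
    linear_combination h2
  -- the deviation vectors
  set h0 : Lp ℂ 2 μ := F - p with hh0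
  set y : ℕ → Lp ℂ 2 μ := fun n => ((adjoint K) ^ n) h0 with hy
  have hyn_p : ∀ n, ⟪y n, p⟫ = 0 := by
    intro n
    rw [hy]
    simp only
    rw [hadjpow n, hKpow n, hh0]
    exact horth F p (P F).2
  have hexpandG : ∀ n : ℕ, ⟪F, (K ^ n) G⟫ = ⟪p, q⟫ + ⟪y n, G⟫ := by
    intro n
    have h1 : ⟪y n, G⟫ = ⟪F, (K ^ n) G⟫ - ⟪p, G⟫ := by
      rw [hy]
      simp only
      rw [hh0, map_sub, inner_sub_left, hadjpow n, hApow n]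
    rw [h1, hpG]
    ring
  have hexpandF : ∀ n : ℕ, ⟪F, (K ^ n) F⟫ = ⟪p, p⟫ + ⟪y n, h0⟫ := by
    intro n
    have h1 : ⟪y n, F⟫ = ⟪F, (K ^ n) F⟫ - ⟪p, F⟫ := by
      rw [hy]
      simp only
      rw [hh0, map_sub, inner_sub_left, hadjpow n, hApow n]
    have h2 : ⟪y n, F⟫ = ⟪y n, h0⟫ := by
      have : (F : Lp ℂ 2 μ) = h0 + p := by rw [hh0]; abel
      rw [this, inner_add_right, hyn_p n, add_zero]
    rw [← h2, h1, hpF]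
    ring
  -- identification of the integrals with inner products
  have hKiter : ∀ n : ℕ, (↑((K ^ n) G) : Ω → ℂ) =ᵐ[μ] g ∘ (T^[n]) := by
    intro n
    induction n with
    | zero =>
      rw [pow_zero, one_apply_eq_self]
      simpa [hG] using hg.coeFn_toLp
    | succ n ih =>
      rw [pow_succ', mul_apply_eq_comp]
      have h1 := Lp.coeFn_compMeasurePreserving ((K ^ n) G) hT
      have h2 : (↑((K ^ n) G) : Ω → ℂ) ∘ T =ᵐ[μ] (g ∘ T^[n]) ∘ T := by
        apply ae_eq_comp (hT.measurable.aemeasurable)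
        rwa [hT.map_eq]
      have h3 : (g ∘ T^[n]) ∘ T = g ∘ T^[n + 1] :=
        funext fun x => by simp [Function.iterate_succ_apply]
      rw [hKcoe] at *
      calc (↑(Lp.compMeasurePreserving T hT ((K ^ n) G)) : Ω → ℂ)
          =ᵐ[μ] (↑((K ^ n) G) : Ω → ℂ) ∘ T := h1
        _ =ᵐ[μ] (g ∘ T^[n]) ∘ T := h2
        _ = g ∘ T^[n + 1] := h3
  have hKiterF : ∀ n : ℕ, (↑((K ^ n) F) : Ω → ℂ) =ᵐ[μ] f ∘ (T^[n]) := by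
    intro n
    induction n with
    | zero =>
      rw [pow_zero, one_apply_eq_self]
      simpa [hF] using hf.coeFn_toLp
    | succ n ih =>
      rw [pow_succ', mul_apply_eq_comp]
      have h1 := Lp.coeFn_compMeasurePreserving ((K ^ n) F) hT
      have h2 : (↑((K ^ n) F) : Ω → ℂ) ∘ T =ᵐ[μ] (f ∘ T^[n]) ∘ T := by
        apply ae_eq_comp (hT.measurable.aemeasurable)
        rwa [hT.map_eq]
      have h3 : (f ∘ T^[n]) ∘ T = f ∘ T^[n + 1] :=
        funext fun x => by simp [Function.iterate_succ_apply]
      calc (↑(Lp.compMeasurePreserving T hT ((K ^ n) F)) : Ω → ℂ)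
          =ᵐ[μ] (↑((K ^ n) F) : Ω → ℂ) ∘ T := h1
        _ =ᵐ[μ] (f ∘ T^[n]) ∘ T := h2
        _ = f ∘ T^[n + 1] := h3
  have hint1 : ∀ (g' : Ω → ℂ) (G' : Lp ℂ 2 μ), (∀ᵐ x ∂μ, (G' : Ω → ℂ) x = g' x) →
      ∀ n : ℕ, True := fun _ _ _ _ => trivial
  have hinnerint : ∀ (φ ψ : Ω → ℂ) (Φ Ψ : Lp ℂ 2 μ), ((Φ : Ω → ℂ) =ᵐ[μ] φ) →
      ((Ψ : Ω → ℂ) =ᵐ[μ] ψ) →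
      ⟪Φ, Ψ⟫ = ∫ x, (starRingEnd ℂ) (φ x) * ψ x ∂μ := by
    intro φ ψ Φ Ψ hΦ hΨ
    rw [L2.inner_def]
    apply integral_congr_ae
    filter_upwards [hΦ, hΨ] with x h1 h2
    rw [RCLike.inner_apply, h1, h2, mul_comm]
  have hexpCov : ∀ n : ℕ, expCovInv μ T f g n = ⟪F, (K ^ n) G⟫ - ⟪p, q⟫ := by
    intro n
    rw [expCovInv]
    rw [hinnerint f (g ∘ T^[n]) F ((K ^ n) G) (hf.coeFn_toLp) (hKiter n)]
    rw [hinnerint (μ[f | invSigma T]) (μ[g | invSigma T]) p q (hPae f hf) (hPae g hg)]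
    rfl
  have hexpCovF : ∀ n : ℕ, expCovInv μ T f f n = ⟪F, (K ^ n) F⟫ - ⟪p, p⟫ := by
    intro n
    rw [expCovInv]
    rw [hinnerint f (f ∘ T^[n]) F ((K ^ n) F) (hf.coeFn_toLp) (hKiterF n)]
    rw [hinnerint (μ[f | invSigma T]) (μ[f | invSigma T]) p p (hPae f hf) (hPae f hf)]
    rfl
  -- the hypothesis in inner-product form
  have hc : Tendsto (fun n : ℕ => ⟪((adjoint K) ^ n) h0, h0⟫) atTop (𝓝 0) := by
    have : ∀ n : ℕ, expCovInv μ T f f n = ⟪y n, h0⟫ := by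
      intro n
      rw [hexpCovF n, hexpandF n]
      ring
    exact hff.congr this
  -- apply the abstract lemma
  have hcore := core_weak_tendsto K hKnorm h0 hc G
  have hgoal : ∀ n : ℕ, expCovInv μ T f g n = ⟪((adjoint K) ^ n) h0, G⟫ := by
    intro n
    rw [hexpCov n, hexpandG n]
    ring
  exact hcore.congr (fun n => (hgoal n).symm)

end
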